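/- arXiv:1604.06263 — 4 statements merged into one kernel-verified Lean document; each statement's English description precedes it below -/
import Mathlib

section
/- Fix d > 0 and c ∈ ℝ, and let σ be the measure on ℝ with Lebesgue density (1/2)·√(d/π)·e^{-d(log|u|)²}/|u|^c for u ≠ 0. Then σ has finite moments of all integer orders, and for all k ∈ ℤ: the even moments satisfy ∫_{-∞}^{∞} u^{2k} dσ(u) = e^{(2k+1-c)²/(4d)} and the odd moments satisfy ∫_{-∞}^{∞} u^{2k+1} dσ(u) = 0. -/
open MeasureTheory Real

private lemma gauss_lin_integrable' (d a : ℝ) (hd : 0 < d) :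
    Integrable (fun x : ℝ => rexp (-d * x ^ 2 + a * x)) := by
  have h := (integrable_cexp_quadratic (b := (d : ℂ)) (by simpa using hd) a 0).re
  refine h.congr (Filter.Eventually.of_forall fun x => ?_)
  have h1 : -(d:ℂ) * x ^ 2 + a * x + 0 = ((-d * x ^ 2 + a * x : ℝ) : ℂ) := by push_cast; ring
  show (Complex.exp _).re = _
  rw [h1, Complex.exp_ofReal_re]

private lemma gauss_lin' (d a : ℝ) (hd : 0 < d) :
    ∫ x : ℝ, rexp (-d * x ^ 2 + a * x) = Real.sqrt (π / d) * rexp (a ^ 2 / (4 * d)) := by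
  have hb : (-(d : ℂ)).re < 0 := by simpa using hd
  have h := integral_cexp_quadratic hb a 0
  have hfun : (fun x : ℝ => Complex.exp (-(d:ℂ) * x ^ 2 + a * x + 0))
      = fun x : ℝ => ((rexp (-d * x ^ 2 + a * x) : ℝ) : ℂ) := by
    ext x
    rw [show -(d:ℂ) * x ^ 2 + a * x + 0 = ((-d * x ^ 2 + a * x : ℝ) : ℂ) by push_cast; ring,
      Complex.ofReal_exp]
  rw [hfun] at h
  have h1 : ((π / d : ℝ) : ℂ) ^ (1/2 : ℂ) = ((Real.sqrt (π/d) : ℝ) : ℂ) := by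
    rw [show (1/2:ℂ) = ((1/2:ℝ):ℂ) by norm_num, ← Complex.ofReal_cpow (by positivity),
      Real.sqrt_eq_rpow]
  have h2 : (0 - (a:ℂ)^2 / (4 * -(d:ℂ))) = ((a ^ 2 / (4 * d) : ℝ) : ℂ) := by
    push_cast; field_simp; ring
  rw [neg_neg, h2, ← Complex.ofReal_exp, show ((π:ℂ)/(d:ℂ)) = ((π/d : ℝ):ℂ) by push_cast; ring,
    h1, ← Complex.ofReal_mul] at h
  have h3 : ((∫ x : ℝ, rexp (-d * x ^ 2 + a * x) : ℝ) : ℂ)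
      = ((Real.sqrt (π/d) * rexp (a ^ 2 / (4 * d)) : ℝ) : ℂ) :=
    (integral_ofReal).symm.trans h
  exact_mod_cast h3

private lemma key_Ioi' (d s : ℝ) (hd : 0 < d) :
    IntegrableOn (fun u : ℝ => rexp (-d * Real.log u ^ 2) * u ^ s) (Set.Ioi 0) ∧
    ∫ u in Set.Ioi (0:ℝ), rexp (-d * Real.log u ^ 2) * u ^ s
      = Real.sqrt (π / d) * rexp ((s + 1) ^ 2 / (4 * d)) := by
  have himg : Real.exp '' Set.univ = Set.Ioi 0 := by rw [Set.image_univ, Real.range_exp]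
  have hderiv : ∀ x ∈ (Set.univ : Set ℝ),
      HasDerivWithinAt Real.exp (rexp x) Set.univ x :=
    fun x _ => (Real.hasDerivAt_exp x).hasDerivWithinAt
  have hinj : Set.InjOn Real.exp Set.univ := Real.exp_injective.injOn
  have hcomp : (fun x : ℝ => |rexp x| • ((fun u : ℝ => rexp (-d * Real.log u ^ 2) * u ^ s) (rexp x)))
      = fun x : ℝ => rexp (-d * x ^ 2 + (s + 1) * x) := by
    ext x
    have hr : (rexp x) ^ s = rexp (x * s) := by
      rw [Real.rpow_def_of_pos (Real.exp_pos _), Real.log_exp]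
    simp only [abs_of_pos (Real.exp_pos x), Real.log_exp, hr, smul_eq_mul, ← Real.exp_add]
    ring_nf
  constructor
  · rw [← himg, integrableOn_image_iff_integrableOn_abs_deriv_smul MeasurableSet.univ hderiv hinj,
      hcomp, integrableOn_univ]
    exact gauss_lin_integrable' d (s + 1) hd
  · rw [← himg, integral_image_eq_integral_abs_deriv_smul MeasurableSet.univ hderiv hinj,
      hcomp, Measure.restrict_univ, gauss_lin' d (s + 1) hd]

private lemma integrable_comp_abs' {f : ℝ → ℝ} (hf : IntegrableOn (fun x => f |x|) (Set.Ioi 0)) :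
    Integrable fun x : ℝ => f |x| := by
  have int_Iic : IntegrableOn (fun x ↦ f |x|) (Set.Iic 0) := by
    rw [← Measure.map_neg_eq_self (volume : Measure ℝ)]
    have m : MeasurableEmbedding fun x : ℝ => -x := (Homeomorph.neg ℝ).measurableEmbedding
    rw [m.integrableOn_map_iff]
    simp_rw [Function.comp_def, abs_neg, Set.neg_preimage, Set.neg_Iic, neg_zero]
    exact Iff.mpr integrableOn_Ici_iff_integrableOn_Ioi hf
  have := int_Iic.union hf
  rwa [Set.Iic_union_Ioi, integrableOn_univ] at this

/-- (Example 1, (ii)) The measure on `ℝ` with Lebesgue density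
`(1/2)√(d/π) e^{-d (log|u|)²} / |u|^c` has finite moments of all integer orders; its even
moments are `e^{(2k+1-c)²/(4d)}` and its odd moments vanish. -/
theorem lognormal_hamburger_moments (d c : ℝ) (hd : 0 < d)
    (σ : Measure ℝ)
    (hσ : σ = volume.withDensity fun u : ℝ =>
      ENNReal.ofReal ((1 / 2) * Real.sqrt (d / π) * Real.exp (-d * Real.log |u| ^ 2) / |u| ^ c)) :
    (∀ n : ℤ, Integrable (fun u : ℝ => |u| ^ n) σ) ∧
    (∀ k : ℤ, ∫ u, u ^ (2 * k) ∂σ = Real.exp ((2 * (k : ℝ) + 1 - c) ^ 2 / (4 * d))) ∧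
    (∀ k : ℤ, ∫ u, u ^ (2 * k + 1) ∂σ = 0) := by
  set ρ : ℝ → ℝ := fun u =>
    (1 / 2) * Real.sqrt (d / π) * Real.exp (-d * Real.log |u| ^ 2) / |u| ^ c with hρ_def
  have hρ_nonneg : ∀ u, 0 ≤ ρ u := by
    intro u
    have : (0:ℝ) ≤ |u| ^ c := Real.rpow_nonneg (abs_nonneg u) c
    positivity
  have hρ_meas : Measurable ρ := by
    have m2 : Measurable fun u : ℝ => |u| ^ c := by fun_prop
    exact (measurable_const.mul
      ((measurable_abs.log.pow_const 2).const_mul (-d)).exp).div m2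
  have habs_zpow : ∀ (u : ℝ) (n : ℤ), |u ^ n| = |u| ^ n :=
    fun u n => map_zpow₀ (absHom : ℝ →*₀ ℝ) u n
  have hρ_abs : ∀ u : ℝ, ρ |u| = ρ u := by
    intro u; simp only [hρ_def, abs_abs]
  -- the moment of order m of the density ρ
  have Emom : ∀ m : ℤ, Integrable (fun u : ℝ => ρ u * |u| ^ m) ∧
      ∫ u : ℝ, ρ u * |u| ^ m = rexp (((m : ℝ) + 1 - c) ^ 2 / (4 * d)) := by
    intro m
    set s : ℝ := (m : ℝ) - c with hs_def
    obtain ⟨hkey_int, hkey_eq⟩ := key_Ioi' d s hd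
    have hEq : Set.EqOn
        (fun u : ℝ => ((1/2) * Real.sqrt (d/π)) * (rexp (-d * Real.log u ^ 2) * u ^ s))
        (fun u : ℝ => ρ u * |u| ^ m) (Set.Ioi 0) := by
      intro u hu
      have hu' : (0:ℝ) < u := hu
      have hc : u ^ c ≠ 0 := (Real.rpow_pos_of_pos hu' c).ne'
      simp only [hρ_def, abs_of_pos hu']
      rw [show (u : ℝ) ^ m = u ^ ((m : ℝ)) by rw [Real.rpow_intCast],
        hs_def, Real.rpow_sub hu']
      field_simp
    have hconst : IntegrableOn
        (fun u : ℝ => ((1/2) * Real.sqrt (d/π)) * (rexp (-d * Real.log u ^ 2) * u ^ s))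
        (Set.Ioi 0) := hkey_int.const_mul _
    have hIoi : IntegrableOn (fun u : ℝ => ρ u * |u| ^ m) (Set.Ioi 0) :=
      hconst.congr_fun hEq measurableSet_Ioi
    have hfeq : (fun u : ℝ => ρ |u| * |(|u|)| ^ m) = fun u : ℝ => ρ u * |u| ^ m := by
      ext u; rw [hρ_abs, abs_abs]
    have hInt : Integrable (fun u : ℝ => ρ u * |u| ^ m) := by
      rw [← hfeq]
      apply integrable_comp_abs' (f := fun u => ρ u * |u| ^ m)
      rw [show (fun u : ℝ => (fun v : ℝ => ρ v * |v| ^ m) |u|)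
        = fun u : ℝ => ρ |u| * |(|u|)| ^ m from rfl, hfeq]
      exact hIoi
    refine ⟨hInt, ?_⟩
    have h2 : ∫ u : ℝ, ρ u * |u| ^ m = 2 * ∫ u in Set.Ioi (0:ℝ), ρ u * |u| ^ m := by
      conv_lhs => rw [← hfeq]
      exact integral_comp_abs (f := fun u => ρ u * |u| ^ m)
    rw [h2, ← setIntegral_congr_fun measurableSet_Ioi hEq, integral_const_mul, hkey_eq]
    have hsqrt : Real.sqrt (d / π) * Real.sqrt (π / d) = 1 := by
      rw [← Real.sqrt_mul (by positivity) (π / d)]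
      rw [show d / π * (π / d) = 1 by field_simp, Real.sqrt_one]
    have hexp : (s + 1) ^ 2 / (4 * d) = ((m : ℝ) + 1 - c) ^ 2 / (4 * d) := by
      rw [hs_def]; ring_nf
    rw [hexp]
    calc 2 * (1 / 2 * Real.sqrt (d / π) * (Real.sqrt (π / d) * rexp (((m:ℝ) + 1 - c) ^ 2 / (4 * d))))
        = (Real.sqrt (d / π) * Real.sqrt (π / d)) * rexp (((m:ℝ) + 1 - c) ^ 2 / (4 * d)) := by ring
      _ = rexp (((m:ℝ) + 1 - c) ^ 2 / (4 * d)) := by rw [hsqrt, one_mul]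
  -- transfer integrability and integrals from σ to volume
  have hdens_meas : Measurable fun u : ℝ => (ρ u).toNNReal := hρ_meas.real_toNNReal
  have hσ' : σ = volume.withDensity fun u : ℝ => ((ρ u).toNNReal : ENNReal) := by
    rw [hσ]; rfl
  have hInt_iff : ∀ g : ℝ → ℝ, Integrable g σ ↔ Integrable (fun u => ρ u * g u) volume := by
    intro g
    rw [hσ, integrable_withDensity_iff (hρ_meas.ennreal_ofReal)
      (Filter.Eventually.of_forall fun x => ENNReal.ofReal_lt_top)]
    constructor
    · intro h
      refine h.congr (Filter.Eventually.of_forall fun u => ?_)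
      show g u * (ENNReal.ofReal (ρ u)).toReal = ρ u * g u
      rw [ENNReal.toReal_ofReal (hρ_nonneg u)]; ring
    · intro h
      refine h.congr (Filter.Eventually.of_forall fun u => ?_)
      show ρ u * g u = g u * (ENNReal.ofReal (ρ u)).toReal
      rw [ENNReal.toReal_ofReal (hρ_nonneg u)]; ring
  have hInteg : ∀ g : ℝ → ℝ, ∫ u, g u ∂σ = ∫ u, ρ u * g u := by
    intro g
    rw [hσ', integral_withDensity_eq_integral_smul hdens_meas]
    congr 1; ext u
    rw [NNReal.smul_def, Real.coe_toNNReal _ (hρ_nonneg u), smul_eq_mul]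
  have habs_even : ∀ (k : ℤ) (u : ℝ), u ^ (2 * k) = |u| ^ (2 * k) := by
    intro k u
    have h1 : u ^ (2 * k) = (u ^ k) ^ 2 := by
      rw [mul_comm, zpow_mul, zpow_two, sq]
    rw [← habs_zpow, abs_of_nonneg (by rw [h1]; positivity)]
  refine ⟨?_, ?_, ?_⟩
  · -- integrability of all |u|^n
    intro n
    rw [hInt_iff]
    exact (Emom n).1
  · -- even moments
    intro k
    rw [hInteg]
    have : (fun u : ℝ => ρ u * u ^ (2 * k)) = fun u : ℝ => ρ u * |u| ^ (2 * k) := by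
      ext u; rw [habs_even]
    rw [this, (Emom (2 * k)).2]
    norm_num
  · -- odd moments
    intro k
    rw [hInteg]
    have hodd : Odd (2 * k + 1) := ⟨k, by ring⟩
    have hzpow_meas : Measurable fun u : ℝ => u ^ (2 * k + 1) := by
      rcases (2 * k + 1) with n | n
      · simpa using measurable_id.pow_const n
      · simp only [zpow_negSucc]
        exact (measurable_id.pow_const (n + 1)).inv
    have hInt_odd : Integrable (fun u : ℝ => ρ u * u ^ (2 * k + 1)) := by
      refine Integrable.mono' (Emom (2 * k + 1)).1
        ((hρ_meas.mul hzpow_meas).aestronglyMeasurable)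
        (Filter.Eventually.of_forall fun u => ?_)
      rw [Real.norm_eq_abs, abs_mul, abs_of_nonneg (hρ_nonneg u), habs_zpow]
    have hneg : ∀ u : ℝ, ρ (-u) * (-u) ^ (2 * k + 1) = -(ρ u * u ^ (2 * k + 1)) := by
      intro u
      rw [show ρ (-u) = ρ u by simp only [hρ_def, abs_neg], hodd.neg_zpow]
      ring
    have h0 : ∫ u : ℝ, ρ u * u ^ (2 * k + 1)
        = -∫ u : ℝ, ρ u * u ^ (2 * k + 1) := by
      conv_lhs => rw [← integral_neg_eq_self (fun u : ℝ => ρ u * u ^ (2 * k + 1)) volume]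
      simp_rw [hneg]
      rw [integral_neg]
    linarith
end

section
/- Fix d > 0 and c ∈ ℝ, and let w(u) = (1/2)·√(d/π)·e^{-d(log|u|)²}/|u|^c for u ≠ 0. Then the Krein condition holds for w: ∫_{-∞}^{∞} log w(u)/(1+u²) du > −∞, i.e. the function u ↦ log w(u)/(1+u²) is Lebesgue-integrable on ℝ. -/
open MeasureTheory Real Set

lemma aux_int (k : ℕ) (hk : k ≠ 0) :
    Integrable (fun u : ℝ => Real.log |u| ^ k / (1 + u ^ 2)) volume := by
  have hkR : (0:ℝ) < 2 * k := by positivity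
  set ε : ℝ := 1 / (2 * k) with hε
  have hεpos : 0 < ε := by positivity
  set C : ℝ := (2 * (k:ℝ)) ^ k with hCdef
  have hC : (0:ℝ) ≤ C := by positivity
  have hmeas : Measurable (fun u : ℝ => Real.log |u| ^ k / (1 + u ^ 2)) :=
    ((Real.measurable_log.comp measurable_abs).pow_const k).div
      (measurable_const.add (measurable_id.pow_const 2))
  have hkne : (k:ℝ) ≠ 0 := Nat.cast_ne_zero.mpr hk
  have hεinv : ε⁻¹ = 2 * k := by rw [hε]; field_simp
  have hεk : (-ε) * k = -(1/2 : ℝ) := by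
    rw [neg_mul, neg_inj, hε, div_mul_eq_mul_div, one_mul, div_eq_iff (by positivity)]; ring
  have hεk' : ε * k = (1/2 : ℝ) := by
    rw [hε, div_mul_eq_mul_div, one_mul, div_eq_iff (by positivity)]; ring
  -- generic: |log u| ≤ 2k * max(u^ε, u^{-ε}) ... we do two regimes
  have hlog_le : ∀ u : ℝ, 0 < u → Real.log u ≤ 2 * k * u ^ ε := by
    intro u hu
    calc Real.log u ≤ u ^ ε / ε := Real.log_le_rpow_div hu.le hεpos
      _ = 2 * k * u ^ ε := by rw [div_eq_mul_inv, hεinv]; ring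
  have boundA : ∀ u : ℝ, 0 < u → u ≤ 1 →
      ‖Real.log |u| ^ k / (1 + u ^ 2)‖ ≤ C * u ^ (-(1/2) : ℝ) := by
    intro u hu hu1
    have habs : |u| = u := abs_of_pos hu
    have h1 : (1:ℝ) ≤ 1 + u ^ 2 := by nlinarith
    have hlog : |Real.log u| ≤ 2 * k * u ^ (-ε) := by
      have h2 : |Real.log u| = Real.log u⁻¹ := by
        rw [Real.log_inv, abs_of_nonpos (Real.log_nonpos hu.le hu1)]
      rw [h2]
      calc Real.log u⁻¹ ≤ 2 * k * (u⁻¹) ^ ε := hlog_le _ (by positivity)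
        _ = 2 * k * u ^ (-ε) := by
            rw [← Real.rpow_neg_one u, ← Real.rpow_mul hu.le, neg_one_mul]
    have key : |Real.log u| ^ k ≤ C * u ^ (-(1/2) : ℝ) := by
      calc |Real.log u| ^ k ≤ (2 * k * u ^ (-ε)) ^ k :=
            pow_le_pow_left₀ (abs_nonneg _) hlog k
        _ = C * u ^ (-(1/2) : ℝ) := by
            rw [mul_pow, ← Real.rpow_natCast (u ^ (-ε)) k, ← Real.rpow_mul hu.le, hεk, hCdef]
    calc ‖Real.log |u| ^ k / (1 + u ^ 2)‖ = |Real.log u| ^ k / (1 + u ^ 2) := by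
          rw [habs, norm_div, norm_pow, Real.norm_eq_abs, Real.norm_eq_abs,
            abs_of_pos (by positivity : (0:ℝ) < 1 + u ^ 2)]
      _ ≤ |Real.log u| ^ k / 1 := by
          apply div_le_div_of_nonneg_left (by positivity) one_pos h1
      _ = |Real.log u| ^ k := div_one _
      _ ≤ C * u ^ (-(1/2) : ℝ) := key
  have boundB : ∀ u : ℝ, 1 < u →
      ‖Real.log |u| ^ k / (1 + u ^ 2)‖ ≤ C * u ^ (-(3/2) : ℝ) := by
    intro u hu
    have hu0 : (0:ℝ) < u := lt_trans one_pos hu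
    have habs : |u| = u := abs_of_pos hu0
    have hsq : u ^ 2 ≤ 1 + u ^ 2 := by nlinarith
    have hlognn : 0 ≤ Real.log u := Real.log_nonneg hu.le
    have key : Real.log u ^ k ≤ C * u ^ ((1/2) : ℝ) := by
      calc Real.log u ^ k ≤ (2 * k * u ^ ε) ^ k :=
            pow_le_pow_left₀ hlognn (hlog_le u hu0) k
        _ = C * u ^ ((1/2) : ℝ) := by
            rw [mul_pow, ← Real.rpow_natCast (u ^ ε) k, ← Real.rpow_mul hu0.le, hεk', hCdef]
    calc ‖Real.log |u| ^ k / (1 + u ^ 2)‖ = Real.log u ^ k / (1 + u ^ 2) := by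
          rw [habs, norm_div, norm_pow, Real.norm_eq_abs, Real.norm_eq_abs,
            abs_of_nonneg hlognn, abs_of_pos (by positivity : (0:ℝ) < 1 + u ^ 2)]
      _ ≤ (C * u ^ ((1/2) : ℝ)) / (u ^ 2) := by
          apply div_le_div₀ (by positivity) key (by positivity) hsq
      _ = C * u ^ (-(3/2) : ℝ) := by
          rw [mul_div_assoc, ← Real.rpow_natCast u 2, ← Real.rpow_sub hu0]
          norm_num
  have hIoi : IntegrableOn (fun u : ℝ => Real.log |u| ^ k / (1 + u ^ 2)) (Ioi 0) := by
    rw [← Ioc_union_Ioi_eq_Ioi (zero_le_one (α := ℝ)), integrableOn_union]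
    constructor
    · have hint : IntegrableOn (fun u : ℝ => C * u ^ (-(1/2) : ℝ)) (Ioc 0 1) := by
        have h := intervalIntegral.intervalIntegrable_rpow' (a := 0) (b := 1)
          (r := -(1/2)) (by norm_num)
        rw [intervalIntegrable_iff, uIoc_of_le zero_le_one] at h
        exact h.const_mul C
      refine Integrable.mono' hint hmeas.aestronglyMeasurable ?_
      filter_upwards [ae_restrict_mem measurableSet_Ioc] with u hu
      exact boundA u hu.1 hu.2
    · have hint : IntegrableOn (fun u : ℝ => C * u ^ (-(3/2) : ℝ)) (Ioi 1) :=
        (integrableOn_Ioi_rpow_of_lt (by norm_num) one_pos).const_mul C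
      refine Integrable.mono' hint hmeas.aestronglyMeasurable ?_
      filter_upwards [ae_restrict_mem measurableSet_Ioi] with u hu
      exact boundB u hu
  rw [← integrableOn_univ, ← Iio_union_Ici (a := (0:ℝ)), integrableOn_union,
    integrableOn_Ici_iff_integrableOn_Ioi]
  refine ⟨?_, hIoi⟩
  rw [← (Measure.measurePreserving_neg (volume : Measure ℝ)).integrableOn_comp_preimage
      (Homeomorph.neg ℝ).measurableEmbedding]
  simp only [Function.comp_def, abs_neg, neg_sq, neg_preimage, neg_Iio, neg_neg, neg_zero]
  exact hIoi

/-- (Example 1, (iii)) The log-normal type density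
`w(u) = (1/2)√(d/π) e^{-d (log|u|)²} / |u|^c` satisfies the Krein condition:
`u ↦ log w(u) / (1 + u²)` is Lebesgue-integrable on `ℝ`. -/
theorem lognormal_krein_condition (d c : ℝ) (hd : 0 < d)
    (w : ℝ → ℝ)
    (hw : w = fun u : ℝ =>
      (1 / 2) * Real.sqrt (d / π) * Real.exp (-d * Real.log |u| ^ 2) / |u| ^ c) :
    Integrable (fun u : ℝ => Real.log (w u) / (1 + u ^ 2)) volume := by
  have hsqrt : (0:ℝ) < Real.sqrt (d / π) := Real.sqrt_pos.mpr (div_pos hd pi_pos)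
  have hA : (0:ℝ) < (1 / 2) * Real.sqrt (d / π) := by positivity
  set K : ℝ := Real.log ((1 / 2) * Real.sqrt (d / π)) with hK
  have hg : Integrable (fun u : ℝ =>
      (K + -d * Real.log |u| ^ 2 - c * Real.log |u|) / (1 + u ^ 2)) volume := by
    have h0 := integrable_inv_one_add_sq.const_mul K
    have h2 := (aux_int 2 two_ne_zero).const_mul (-d)
    have h1 := (aux_int 1 one_ne_zero).const_mul (-c)
    refine ((h0.add h2).add h1).congr (Filter.Eventually.of_forall fun u => ?_)
    have hne : (1 + u ^ 2 : ℝ) ≠ 0 := by positivity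
    simp only [Pi.add_apply, pow_one]
    field_simp
    ring
  refine hg.congr ?_
  have h0 : ∀ᵐ u : ℝ, u ≠ (0:ℝ) := by
    rw [ae_iff]
    simp only [not_not, Set.setOf_eq_eq_singleton]
    exact measure_singleton 0
  filter_upwards [h0] with u hu
  have habs : 0 < |u| := abs_pos.mpr hu
  rw [hw]
  simp only
  rw [Real.log_div (by positivity) (ne_of_gt (Real.rpow_pos_of_pos habs c)),
    Real.log_mul (by positivity) (Real.exp_ne_zero _), Real.log_exp,
    Real.log_rpow habs]
end

section
/- For every d > 0 and c ∈ ℝ, the strong Stieltjes moment problem with moments μ_n = e^{(n+1-c)²/(4d)}, n ∈ ℤ, is indeterminate: there exist two distinct finite Borel measures β₁ and β₂ on (0,∞), each with infinite support, such that ∫_{0}^{∞} u^n dβ_i(u) = e^{(n+1-c)²/(4d)} (up to one common positive normalizing constant) for all n ∈ ℤ and i = 1,2. -/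
open MeasureTheory Real
open scoped ENNReal NNReal

section AuxGauss
open Complex

private lemma aux_sqrt_cpow {d : ℝ} (hd : 0 < d) :
    ((π : ℂ) / (d : ℂ)) ^ (1 / 2 : ℂ) = ((Real.sqrt (π / d) : ℝ) : ℂ) := by
  rw [Real.sqrt_eq_rpow, show ((π:ℂ)/(d:ℂ)) = (((π/d : ℝ)) : ℂ) by push_cast; ring,
    show ((1/2 : ℂ)) = (((1/2 : ℝ)) : ℂ) by norm_num,
    ← Complex.ofReal_cpow (by positivity)]

private lemma aux_gq_integrable {d : ℝ} (hd : 0 < d) (k : ℝ) :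
    Integrable (fun t : ℝ => Real.exp (k * t - d * t ^ 2)) := by
  have h := Complex.reCLM.integrable_comp
    (integrable_cexp_quadratic (b := (d : ℂ)) (by simpa using hd) (k : ℂ) 0)
  refine h.congr ?_
  filter_upwards with t
  rw [Complex.reCLM_apply,
    show (-(d:ℂ) * (t:ℂ) ^ 2 + (k:ℂ) * (t:ℂ) + 0) = (((k * t - d * t ^ 2 : ℝ)) : ℂ) by
      push_cast; ring, ← Complex.ofReal_exp, Complex.ofReal_re]

private lemma aux_gq_integral {d : ℝ} (hd : 0 < d) (k : ℝ) :
    ∫ t : ℝ, Real.exp (k * t - d * t ^ 2)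
      = Real.sqrt (π / d) * Real.exp (k ^ 2 / (4 * d)) := by
  have hb : (-(d:ℂ)).re < 0 := by simpa using hd
  have hint := integrable_cexp_quadratic' hb (k : ℂ) 0
  have h := Complex.reCLM.integral_comp_comm hint
  rw [integral_cexp_quadratic hb] at h
  calc ∫ t : ℝ, Real.exp (k * t - d * t ^ 2)
      = ∫ t : ℝ, Complex.reCLM (Complex.exp (-(d:ℂ) * (t:ℂ) ^ 2 + (k:ℂ) * (t:ℂ) + 0)) := by
        congr 1; funext t
        rw [Complex.reCLM_apply,
          show (-(d:ℂ) * (t:ℂ) ^ 2 + (k:ℂ) * (t:ℂ) + 0) = (((k * t - d * t ^ 2 : ℝ)) : ℂ) by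
            push_cast; ring, ← Complex.ofReal_exp, Complex.ofReal_re]
    _ = Real.sqrt (π / d) * Real.exp (k ^ 2 / (4 * d)) := by
        rw [h, Complex.reCLM_apply, neg_neg, aux_sqrt_cpow hd,
          show ((0:ℂ) - (k:ℂ) ^ 2 / (4 * -(d:ℂ))) = (((k ^ 2 / (4 * d) : ℝ)) : ℂ) by
            push_cast; field_simp; ring,
          ← Complex.ofReal_exp, ← Complex.ofReal_mul, Complex.ofReal_re]

private lemma aux_gq_sin_integrable {d : ℝ} (hd : 0 < d) (k ω φ : ℝ) :
    Integrable (fun t : ℝ => Real.exp (k * t - d * t ^ 2) * Real.sin (ω * t + φ)) := by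
  have h := Complex.imCLM.integrable_comp
    (integrable_cexp_quadratic (b := (d : ℂ)) (by simpa using hd) ((k : ℂ) + ω * I) (φ * I))
  refine h.congr ?_
  filter_upwards with t
  rw [Complex.imCLM_apply,
    show (-(d:ℂ) * (t:ℂ) ^ 2 + ((k:ℂ) + ω * I) * (t:ℂ) + φ * I)
        = (((k * t - d * t ^ 2 : ℝ)) : ℂ) + ((ω * t + φ : ℝ) : ℂ) * I by push_cast; ring,
    Complex.exp_add, ← Complex.ofReal_exp]
  simp only [Complex.mul_im, Complex.ofReal_re, Complex.ofReal_im, Complex.exp_ofReal_mul_I_im,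
    Complex.exp_ofReal_mul_I_re, zero_mul, add_zero, mul_zero]

private lemma aux_gq_sin_integral {d : ℝ} (hd : 0 < d) (k φ : ℝ) :
    ∫ t : ℝ, Real.exp (k * t - d * t ^ 2) * Real.sin (2 * π * d * t + φ)
      = Real.sqrt (π / d) * Real.exp (k ^ 2 / (4 * d) - π ^ 2 * d) * Real.sin (π * k + φ) := by
  have hb : (-(d:ℂ)).re < 0 := by simpa using hd
  have hint := integrable_cexp_quadratic' hb ((k : ℂ) + (2 * π * d) * I) ((φ : ℝ) * I)
  have h := Complex.imCLM.integral_comp_comm hint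
  rw [integral_cexp_quadratic hb] at h
  calc ∫ t : ℝ, Real.exp (k * t - d * t ^ 2) * Real.sin (2 * π * d * t + φ)
      = ∫ t : ℝ, Complex.imCLM
          (Complex.exp (-(d:ℂ) * (t:ℂ) ^ 2 + ((k:ℂ) + (2 * π * d) * I) * (t:ℂ) + (φ:ℂ) * I)) := by
        congr 1; funext t
        rw [Complex.imCLM_apply,
          show (-(d:ℂ) * (t:ℂ) ^ 2 + ((k:ℂ) + (2 * π * d) * I) * (t:ℂ) + (φ:ℂ) * I)
              = (((k * t - d * t ^ 2 : ℝ)) : ℂ) + ((2 * π * d * t + φ : ℝ) : ℂ) * I by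
            push_cast; ring,
          Complex.exp_add, ← Complex.ofReal_exp]
        simp only [Complex.mul_im, Complex.ofReal_re, Complex.ofReal_im,
          Complex.exp_ofReal_mul_I_im, Complex.exp_ofReal_mul_I_re, zero_mul, add_zero, mul_zero]
    _ = Real.sqrt (π / d) * Real.exp (k ^ 2 / (4 * d) - π ^ 2 * d) * Real.sin (π * k + φ) := by
        rw [h, Complex.imCLM_apply, neg_neg, aux_sqrt_cpow hd,
          show ((φ:ℂ) * I - ((k:ℂ) + (2 * π * d) * I) ^ 2 / (4 * -(d:ℂ)))
              = (((k ^ 2 / (4 * d) - π ^ 2 * d : ℝ)) : ℂ) + ((π * k + φ : ℝ) : ℂ) * I by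
            have hd' : (d:ℂ) ≠ 0 := by exact_mod_cast hd.ne'
            field_simp
            simp only [Complex.ext_iff, pow_two, Complex.mul_re, Complex.mul_im, Complex.add_re,
              Complex.add_im, Complex.sub_re, Complex.sub_im, Complex.ofReal_re, Complex.ofReal_im,
              Complex.I_re, Complex.I_im, Complex.ofReal_mul, Complex.neg_re, Complex.neg_im]
            norm_num
            constructor <;> [linear_combination (4 * π ^ 2 * d ^ 2 - k ^ 2) * mul_inv_cancel₀ hd.ne'; ring],
          Complex.exp_add, ← Complex.ofReal_exp]
        simp only [Complex.mul_im, Complex.mul_re, Complex.ofReal_re, Complex.ofReal_im,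
          Complex.exp_ofReal_mul_I_im, Complex.exp_ofReal_mul_I_re, zero_mul, add_zero, mul_zero,
          sub_zero, zero_add]
        ring

end AuxGauss

/-- The measure on `(0,∞)` obtained by pushing forward `g · Lebesgue` under `exp`. -/
noncomputable def auxExpMeasure (g : ℝ → ℝ) : Measure ℝ :=
  (volume.withDensity fun t => ENNReal.ofReal (g t)).map Real.exp

private lemma aux_expEmb : MeasurableEmbedding Real.exp :=
  Real.continuous_exp.measurableEmbedding Real.exp_injective

private lemma aux_expMeasure_isFinite {g : ℝ → ℝ} (hgi : Integrable g) :
    IsFiniteMeasure (auxExpMeasure g) := by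
  constructor
  rw [auxExpMeasure, Measure.map_apply Real.measurable_exp MeasurableSet.univ, Set.preimage_univ,
    withDensity_apply _ MeasurableSet.univ, setLIntegral_univ]
  exact hgi.lintegral_lt_top

private lemma aux_expMeasure_Iic (g : ℝ → ℝ) : auxExpMeasure g (Set.Iic 0) = 0 := by
  rw [auxExpMeasure, Measure.map_apply Real.measurable_exp measurableSet_Iic,
    show Real.exp ⁻¹' (Set.Iic 0) = ∅ by ext t; simp [not_le.2 (Real.exp_pos t)]]
  simp

private lemma aux_expMeasure_compl_finset {g : ℝ → ℝ} (hg : Continuous g) (hgpos : ∀ t, 0 < g t)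
    (s : Finset ℝ) : auxExpMeasure g ((↑s : Set ℝ)ᶜ) ≠ 0 := by
  rw [auxExpMeasure, Measure.map_apply Real.measurable_exp s.finite_toSet.measurableSet.compl,
    Set.preimage_compl]
  intro h0
  have hA0 : (volume.withDensity fun t => ENNReal.ofReal (g t)) (Real.exp ⁻¹' ↑s) = 0 :=
    withDensity_absolutelyContinuous _ _
      ((s.finite_toSet.preimage Real.exp_injective.injOn).measure_zero _)
  have huniv : (volume.withDensity fun t => ENNReal.ofReal (g t)) Set.univ = 0 := by
    have h := measure_union_le (μ := volume.withDensity fun t => ENNReal.ofReal (g t))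
      (Real.exp ⁻¹' ↑s) (Real.exp ⁻¹' ↑s)ᶜ
    rw [Set.union_compl_self] at h
    simpa [hA0, h0] using h
  rw [withDensity_apply _ MeasurableSet.univ, setLIntegral_univ,
    lintegral_eq_zero_iff hg.measurable.ennreal_ofReal] at huniv
  have h2 : ∀ᵐ (t : ℝ), False := huniv.mono fun t ht => by
    simp only [Pi.zero_apply, ENNReal.ofReal_eq_zero] at ht
    exact absurd ht (not_le.2 (hgpos t))
  rw [Filter.eventually_false_iff_eq_bot, ae_eq_bot] at h2
  exact (NeZero.ne (volume : Measure ℝ)) h2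

private lemma aux_exp_zpow (n : ℤ) (t : ℝ) : Real.exp t ^ n = Real.exp (n * t) := by
  rw [mul_comm, Real.exp_mul, Real.rpow_intCast]

private lemma aux_expMeasure_integrable_iff {g : ℝ → ℝ} (hg : Continuous g)
    (hg0 : ∀ t, 0 ≤ g t) (n : ℤ) :
    Integrable (fun u : ℝ => u ^ n) (auxExpMeasure g) ↔
      Integrable (fun t => Real.exp (n * t) * g t) := by
  rw [auxExpMeasure, aux_expEmb.integrable_map_iff,
    integrable_withDensity_iff hg.measurable.ennreal_ofReal
      (Filter.Eventually.of_forall fun t => ENNReal.ofReal_lt_top)]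
  refine integrable_congr (Filter.Eventually.of_forall fun t => ?_)
  simp only [Function.comp_apply, ENNReal.toReal_ofReal (hg0 t), aux_exp_zpow]

private lemma aux_expMeasure_integral {g : ℝ → ℝ} (hg : Continuous g)
    (hg0 : ∀ t, 0 ≤ g t) (n : ℤ) :
    ∫ u, u ^ n ∂(auxExpMeasure g) = ∫ t, Real.exp (n * t) * g t := by
  rw [auxExpMeasure, aux_expEmb.integral_map,
    show (fun t => ENNReal.ofReal (g t)) = (fun t => (((g t).toNNReal : ℝ≥0) : ℝ≥0∞)) from rfl,
    integral_withDensity_eq_integral_smul hg.measurable.real_toNNReal]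
  congr 1; funext t
  simp [NNReal.smul_def, Real.coe_toNNReal _ (hg0 t), aux_exp_zpow, mul_comm]

private lemma aux_expMeasure_Ioo (g : ℝ → ℝ) (a b : ℝ) :
    auxExpMeasure g (Set.Ioo (Real.exp a) (Real.exp b))
      = ∫⁻ t in Set.Ioo a b, ENNReal.ofReal (g t) := by
  rw [auxExpMeasure, Measure.map_apply Real.measurable_exp measurableSet_Ioo,
    show Real.exp ⁻¹' (Set.Ioo (Real.exp a) (Real.exp b)) = Set.Ioo a b by
      ext t; simp [Real.exp_lt_exp],
    withDensity_apply _ measurableSet_Ioo]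

/-- (Example 2, (i)) For every `d > 0` and `c ∈ ℝ`, the strong
Stieltjes moment problem with moments `μₙ = e^{(n+1-c)²/(4d)}`, `n ∈ ℤ`, is
indeterminate: there are two distinct finite Borel measures on `(0,∞)` with infinite
support realizing these moments (up to one common positive normalizing constant). -/
theorem lognormal_strong_stieltjes_indeterminate (d c : ℝ) (hd : 0 < d) :
    ∃ β₁ β₂ : Measure ℝ, IsFiniteMeasure β₁ ∧ IsFiniteMeasure β₂ ∧
      β₁ (Set.Iic 0) = 0 ∧ β₂ (Set.Iic 0) = 0 ∧
      (∀ s : Finset ℝ, β₁ ((↑s : Set ℝ)ᶜ) ≠ 0) ∧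
      (∀ s : Finset ℝ, β₂ ((↑s : Set ℝ)ᶜ) ≠ 0) ∧
      β₁ ≠ β₂ ∧
      ∃ C : ℝ, 0 < C ∧ ∀ n : ℤ,
        (Integrable (fun u : ℝ => u ^ n) β₁ ∧
          ∫ u, u ^ n ∂β₁ = C * Real.exp (((n : ℝ) + 1 - c) ^ 2 / (4 * d))) ∧
        (Integrable (fun u : ℝ => u ^ n) β₂ ∧
          ∫ u, u ^ n ∂β₂ = C * Real.exp (((n : ℝ) + 1 - c) ^ 2 / (4 * d))) := by
  classical
  set g₁ : ℝ → ℝ := fun t => Real.exp ((1 - c) * t - d * t ^ 2) with hg₁def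
  set g₂ : ℝ → ℝ :=
    fun t => g₁ t + 1 / 2 * (g₁ t * Real.sin (2 * π * d * t + π * c)) with hg₂def
  have hg₁cont : Continuous g₁ := by fun_prop
  have hg₂cont : Continuous g₂ := by fun_prop
  have hg₁pos : ∀ t, 0 < g₁ t := fun t => Real.exp_pos _
  have hg₂pos : ∀ t, 0 < g₂ t := by
    intro t
    have h1 : -1 ≤ Real.sin (2 * π * d * t + π * c) := Real.neg_one_le_sin _
    have h2 : 0 < g₁ t := hg₁pos t
    simp only [hg₂def]
    nlinarith
  have hg₁int : Integrable g₁ := aux_gq_integrable hd (1 - c)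
  have hg₂int : Integrable g₂ :=
    hg₁int.add ((aux_gq_sin_integrable hd (1 - c) (2 * π * d) (π * c)).const_mul (1 / 2))
  refine ⟨auxExpMeasure g₁, auxExpMeasure g₂, aux_expMeasure_isFinite hg₁int,
    aux_expMeasure_isFinite hg₂int, aux_expMeasure_Iic g₁, aux_expMeasure_Iic g₂,
    aux_expMeasure_compl_finset hg₁cont hg₁pos, aux_expMeasure_compl_finset hg₂cont hg₂pos,
    ?_, ?_⟩
  · -- the two measures are distinct
    haveI : IsFiniteMeasure (auxExpMeasure g₁) := aux_expMeasure_isFinite hg₁int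
    set a : ℝ := -c / (2 * d) with hadef
    set b : ℝ := (1 - c) / (2 * d) with hbdef
    have hsin_pos : ∀ t ∈ Set.Ioo a b, 0 < Real.sin (2 * π * d * t + π * c) := by
      intro t ht
      have h2πd : (0:ℝ) < 2 * π * d := by positivity
      have hlow : 2 * π * d * a = -(π * c) := by
        rw [hadef]; field_simp
      have hhigh : 2 * π * d * b = π - π * c := by
        rw [hbdef]; field_simp
      have h1 : 2 * π * d * a < 2 * π * d * t := by
        exact mul_lt_mul_of_pos_left ht.1 h2πd
      have h2 : 2 * π * d * t < 2 * π * d * b := by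
        exact mul_lt_mul_of_pos_left ht.2 h2πd
      refine Real.sin_pos_of_pos_of_lt_pi ?_ ?_ <;> [linarith; linarith]
    intro heq
    have hab : a < b := by
      rw [hadef, hbdef, div_lt_div_iff₀ (by positivity) (by positivity)]
      nlinarith
    have h₁ := aux_expMeasure_Ioo g₁ a b
    have h₂ := aux_expMeasure_Ioo g₂ a b
    have hEmeas : Measurable fun t =>
        ENNReal.ofReal (1 / 2 * (g₁ t * Real.sin (2 * π * d * t + π * c))) := by
      apply Measurable.ennreal_ofReal
      fun_prop
    have hsum : auxExpMeasure g₂ (Set.Ioo (Real.exp a) (Real.exp b))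
        = auxExpMeasure g₁ (Set.Ioo (Real.exp a) (Real.exp b))
          + ∫⁻ t in Set.Ioo a b,
              ENNReal.ofReal (1 / 2 * (g₁ t * Real.sin (2 * π * d * t + π * c))) := by
      rw [h₂, h₁]
      rw [setLIntegral_congr_fun measurableSet_Ioo (fun t ht => ?_),
        lintegral_add_left hg₁cont.measurable.ennreal_ofReal]
      show ENNReal.ofReal (g₂ t)
        = ENNReal.ofReal (g₁ t) + ENNReal.ofReal (1 / 2 * (g₁ t * Real.sin (2 * π * d * t + π * c)))
      rw [hg₂def, ENNReal.ofReal_add (hg₁pos t).le]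
      have h1 := hsin_pos t ht
      have h2 := hg₁pos t
      nlinarith
    have hEpos : 0 < ∫⁻ t in Set.Ioo a b,
        ENNReal.ofReal (1 / 2 * (g₁ t * Real.sin (2 * π * d * t + π * c))) := by
      rw [lintegral_pos_iff_support hEmeas]
      have hsub : Set.Ioo a b ⊆ Function.support fun t =>
          ENNReal.ofReal (1 / 2 * (g₁ t * Real.sin (2 * π * d * t + π * c))) := by
        intro t ht
        have : (0:ℝ) < 1 / 2 * (g₁ t * Real.sin (2 * π * d * t + π * c)) := by
          have := hsin_pos t ht
          have := hg₁pos t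
          positivity
        simp only [Function.mem_support, ne_eq, ENNReal.ofReal_eq_zero, not_le]
        exact this
      calc (0:ℝ≥0∞) < ENNReal.ofReal (b - a) := by
            rw [ENNReal.ofReal_pos]; linarith
        _ = (volume.restrict (Set.Ioo a b)) (Set.Ioo a b) := by
            rw [Measure.restrict_apply measurableSet_Ioo, Set.inter_self, Real.volume_Ioo]
        _ ≤ _ := measure_mono hsub
    have hne := measure_ne_top (auxExpMeasure g₁) (Set.Ioo (Real.exp a) (Real.exp b))
    rw [← heq] at hsum
    nth_rewrite 1 [← add_zero (auxExpMeasure g₁ (Set.Ioo (Real.exp a) (Real.exp b)))] at hsum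
    exact hEpos.ne' ((ENNReal.add_right_inj hne).mp hsum).symm
  · -- the moments
    refine ⟨Real.sqrt (π / d), Real.sqrt_pos.mpr (by positivity), fun n => ?_⟩
    have hkey₁ : ∀ t : ℝ, Real.exp ((n:ℝ) * t) * g₁ t
        = Real.exp (((n:ℝ) + 1 - c) * t - d * t ^ 2) := by
      intro t
      rw [hg₁def, ← Real.exp_add]
      ring_nf
    have hkey₂ : ∀ t : ℝ, Real.exp ((n:ℝ) * t) * g₂ t
        = Real.exp (((n:ℝ) + 1 - c) * t - d * t ^ 2)
          + 1 / 2 * (Real.exp (((n:ℝ) + 1 - c) * t - d * t ^ 2)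
              * Real.sin (2 * π * d * t + π * c)) := by
      intro t
      rw [hg₂def]
      simp only [mul_add]
      rw [hkey₁ t]
      ring_nf
      rw [← Real.exp_add]
      ring_nf
    have hsin0 : Real.sin (π * ((n:ℝ) + 1 - c) + π * c) = 0 := by
      rw [show π * ((n:ℝ) + 1 - c) + π * c = ((n + 1 : ℤ) : ℝ) * π by push_cast; ring]
      exact Real.sin_int_mul_pi (n + 1)
    constructor
    · constructor
      · rw [aux_expMeasure_integrable_iff hg₁cont (fun t => (hg₁pos t).le) n]
        exact (aux_gq_integrable hd ((n:ℝ) + 1 - c)).congr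
          (Filter.Eventually.of_forall fun t => (hkey₁ t).symm)
      · rw [aux_expMeasure_integral hg₁cont (fun t => (hg₁pos t).le) n]
        rw [integral_congr_ae (Filter.Eventually.of_forall hkey₁)]
        exact aux_gq_integral hd ((n:ℝ) + 1 - c)
    · constructor
      · rw [aux_expMeasure_integrable_iff hg₂cont (fun t => (hg₂pos t).le) n]
        refine Integrable.congr ?_ (Filter.Eventually.of_forall fun t => (hkey₂ t).symm)
        exact (aux_gq_integrable hd ((n:ℝ) + 1 - c)).add
          ((aux_gq_sin_integrable hd ((n:ℝ) + 1 - c) (2 * π * d) (π * c)).const_mul (1 / 2))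
      · rw [aux_expMeasure_integral hg₂cont (fun t => (hg₂pos t).le) n,
          integral_congr_ae (Filter.Eventually.of_forall hkey₂),
          integral_add (aux_gq_integrable hd ((n:ℝ) + 1 - c))
            ((aux_gq_sin_integrable hd ((n:ℝ) + 1 - c) (2 * π * d) (π * c)).const_mul (1 / 2)),
          integral_const_mul, aux_gq_integral hd ((n:ℝ) + 1 - c),
          aux_gq_sin_integral hd ((n:ℝ) + 1 - c) (π * c), hsin0]
        ring
end

section
/- Let σ be a finite Borel measure on ℝ with σ({0}) = 0 and finite moments of all integer orders (∫ |u|^n dσ(u) < ∞ for all n ∈ ℤ). Let g be a σ-essentially bounded measurable function on ℝ such that ∫_{-∞}^{∞} e^{iαu} g(u) dσ(u) = 0 for all α ≥ 0. Then ∫_{-∞}^{∞} u^n g(u) dσ(u) = 0 for every n ∈ ℤ (both nonnegative and negative integers n). -/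
open MeasureTheory Real

/-- (key step of the proof of Theorem 4.1) If `g ∈ L^∞(σ)` annihilates
all exponentials `e^{iαu}`, `α ≥ 0`, with respect to a finite Borel measure `σ` on `ℝ`
with no mass at the origin and finite moments of all integer orders, then
`∫ uⁿ g(u) dσ(u) = 0` for all `n ∈ ℤ`. -/
theorem annihilates_all_powers_of_annihilates_exponentials
    (σ : Measure ℝ) [IsFiniteMeasure σ]
    (h0 : σ {0} = 0)
    (hmom : ∀ n : ℤ, Integrable (fun u : ℝ => |u| ^ n) σ)
    (g : ℝ → ℂ) (hg : MemLp g ⊤ σ)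
    (hexp : ∀ α : ℝ, 0 ≤ α → ∫ u, Complex.exp (Complex.I * (α : ℂ) * (u : ℂ)) * g u ∂σ = 0) :
    ∀ n : ℤ, ∫ u, (u : ℂ) ^ n * g u ∂σ = 0 := by
  classical
  have hgm : AEStronglyMeasurable g σ := hg.1
  set C : ℝ := (eLpNormEssSup g σ).toReal with hCdef
  have hgC : ∀ᵐ u ∂σ, ‖g u‖ ≤ C := by
    have h := hg.2
    rw [eLpNorm_exponent_top] at h
    filter_upwards [ae_le_eLpNormEssSup (f := g) (μ := σ)] with u hu
    have h2 := ENNReal.toReal_mono h.ne hu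
    simpa using h2
  have hCnn : (0 : ℝ) ≤ C := ENNReal.toReal_nonneg
  have hne : ∀ᵐ u ∂σ, u ≠ 0 := by
    rw [ae_iff]
    simpa [Set.setOf_eq_eq_singleton, not_not] using h0
  have hnorm_exp : ∀ (α u : ℝ), ‖Complex.exp (Complex.I * α * u)‖ = 1 := by
    intro α u
    have h1 : (Complex.I * α * u : ℂ) = ((α * u : ℝ) : ℂ) * Complex.I := by push_cast; ring
    rw [h1, Complex.norm_exp_ofReal_mul_I]
  have hpowm : ∀ m : ℤ, Measurable fun u : ℝ => (u : ℂ) ^ m := fun m =>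
    Complex.measurable_ofReal.pow measurable_const
  have hmeas : ∀ (m : ℤ) (α : ℝ),
      AEStronglyMeasurable (fun u : ℝ => Complex.exp (Complex.I * α * u) * ((u:ℂ)^m * g u)) σ := by
    intro m α
    exact ((Complex.continuous_exp.comp (by fun_prop)).aestronglyMeasurable).mul
      (((hpowm m).aestronglyMeasurable).mul hgm)
  have hnormval : ∀ (m : ℤ) (α : ℝ) (u : ℝ),
      ‖Complex.exp (Complex.I * α * u) * ((u:ℂ)^m * g u)‖ = |u| ^ m * ‖g u‖ := by
    intro m α u
    rw [norm_mul, hnorm_exp, one_mul, norm_mul, norm_zpow, Complex.norm_real, Real.norm_eq_abs]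
  have hbound : ∀ (m : ℤ) (α : ℝ), ∀ᵐ (u : ℝ) ∂σ,
      ‖Complex.exp (Complex.I * α * u) * ((u:ℂ)^m * g u)‖ ≤ C * |u| ^ m := by
    intro m α
    filter_upwards [hgC] with u hu
    rw [hnormval, mul_comm C]
    exact mul_le_mul_of_nonneg_left hu (zpow_nonneg (abs_nonneg u) m)
  have key_int : ∀ (m : ℤ) (α : ℝ),
      Integrable (fun u : ℝ => Complex.exp (Complex.I * α * u) * ((u:ℂ)^m * g u)) σ :=
    fun m α => ((hmom m).const_mul C).mono' (hmeas m α) (hbound m α)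
  set F : ℤ → ℝ → ℂ :=
    fun m α => ∫ u, Complex.exp (Complex.I * α * u) * ((u:ℂ)^m * g u) ∂σ with hF
  -- derivative of the exponential
  have hdexp : ∀ (u x : ℝ), HasDerivAt (fun x : ℝ => Complex.exp (Complex.I * x * u))
      (Complex.I * u * Complex.exp (Complex.I * x * u)) x := by
    intro u x
    have h1 := (((hasDerivAt_id (x : ℂ)).const_mul (Complex.I * u)).cexp).comp_ofReal
    simp only [id_eq, mul_one] at h1
    have hfun : (fun y : ℝ => Complex.exp (Complex.I * (u:ℂ) * (y:ℂ)))
        = fun y : ℝ => Complex.exp (Complex.I * (y:ℂ) * (u:ℂ)) := by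
      funext y; congr 1; ring
    rw [hfun] at h1
    have hval : Complex.exp (Complex.I * (u:ℂ) * (x:ℂ)) * (Complex.I * u)
        = Complex.I * u * Complex.exp (Complex.I * (x:ℂ) * (u:ℂ)) := by
      rw [mul_comm]; congr 2; ring
    rwa [hval] at h1
  -- derivative of F
  have hder : ∀ (m : ℤ) (α₀ : ℝ), HasDerivAt (F m) (Complex.I * F (m+1) α₀) α₀ := by
    intro m α₀
    have H := hasDerivAt_integral_of_dominated_loc_of_deriv_le (μ := σ) (x₀ := α₀)
      (F := fun (x : ℝ) (u : ℝ) => Complex.exp (Complex.I * x * u) * ((u:ℂ)^m * g u))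
      (F' := fun (x : ℝ) (u : ℝ) => (Complex.I * u * Complex.exp (Complex.I * x * u)) * ((u:ℂ)^m * g u))
      (bound := fun u => C * |u| ^ (m+1)) (s := Metric.ball α₀ 1) (Metric.ball_mem_nhds α₀ one_pos)
      (Filter.Eventually.of_forall fun x => hmeas m x)
      (key_int m α₀)
      (((Continuous.aestronglyMeasurable (by fun_prop :
          Continuous fun u : ℝ => Complex.I * (u:ℂ) * Complex.exp (Complex.I * α₀ * u)))).mul
        (((hpowm m).aestronglyMeasurable).mul hgm))
      ?_ ((hmom (m+1)).const_mul C)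
      (Filter.Eventually.of_forall fun u x _ => (hdexp u x).mul_const _)
    · have heq : (∫ u, (Complex.I * u * Complex.exp (Complex.I * α₀ * u)) * ((u:ℂ)^m * g u) ∂σ)
          = Complex.I * F (m+1) α₀ := by
        rw [hF]
        rw [← integral_const_mul]
        apply integral_congr_ae
        filter_upwards [hne] with u hu0
        have huc : (u:ℂ) ≠ 0 := Complex.ofReal_ne_zero.mpr hu0
        rw [zpow_add_one₀ huc]
        ring
      rw [← heq]
      exact H.2
    · filter_upwards [hgC, hne] with u hu hu0
      intro x _
      have h1 : ‖(Complex.I * u * Complex.exp (Complex.I * x * u)) * ((u:ℂ)^m * g u)‖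
          = |u| * (|u| ^ m * ‖g u‖) := by
        simp only [norm_mul, hnorm_exp, Complex.norm_I, norm_zpow, Complex.norm_real,
          Real.norm_eq_abs, one_mul, mul_one]
      rw [h1]
      have habs : |u| ^ (m+1) = |u| ^ m * |u| := zpow_add_one₀ (abs_ne_zero.mpr hu0) m
      calc |u| * (|u| ^ m * ‖g u‖) ≤ |u| * (|u| ^ m * C) := by
            apply mul_le_mul_of_nonneg_left _ (abs_nonneg u)
            exact mul_le_mul_of_nonneg_left hu (zpow_nonneg (abs_nonneg u) m)
        _ = C * |u| ^ (m+1) := by rw [habs]; ring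
  -- continuity of F
  have hFcont : ∀ m : ℤ, Continuous (F m) := by
    intro m
    rw [continuous_iff_continuousAt]
    intro α₀
    apply continuousAt_of_dominated (bound := fun u => C * |u| ^ m)
    · exact Filter.Eventually.of_forall fun x => hmeas m x
    · exact Filter.Eventually.of_forall fun x => hbound m x
    · exact (hmom m).const_mul C
    · exact Filter.Eventually.of_forall fun u => Continuous.continuousAt (by fun_prop)
  -- Fubini identity
  have fub : ∀ (m : ℤ) (T : ℝ), 0 ≤ T →
      ∫ α in (0:ℝ)..T, F m α = (F (m-1) T - F (m-1) 0) / Complex.I := by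
    intro m T hT
    haveI : IsFiniteMeasure (volume.restrict (Set.Ioc (0:ℝ) T)) :=
      ⟨by rw [Measure.restrict_apply_univ]; exact measure_Ioc_lt_top⟩
    have hint : Integrable (Function.uncurry fun (α : ℝ) (u : ℝ) =>
        Complex.exp (Complex.I * α * u) * ((u:ℂ)^m * g u))
        ((volume.restrict (Set.Ioc (0:ℝ) T)).prod σ) := by
      have hmeas2 : AEStronglyMeasurable (Function.uncurry fun (α : ℝ) (u : ℝ) =>
          Complex.exp (Complex.I * α * u) * ((u:ℂ)^m * g u))
          ((volume.restrict (Set.Ioc (0:ℝ) T)).prod σ) := by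
        apply AEStronglyMeasurable.mul
        · exact (Complex.continuous_exp.comp (by fun_prop :
            Continuous fun p : ℝ × ℝ => Complex.I * (p.1:ℂ) * (p.2:ℂ))).aestronglyMeasurable
        · exact (((hpowm m).comp measurable_snd).aestronglyMeasurable).mul hgm.comp_snd
      refine Integrable.mono' (g := fun p : ℝ × ℝ => (1:ℝ) * (C * |p.2| ^ m)) ?_ hmeas2 ?_
      · exact Integrable.mul_prod (integrable_const (1:ℝ)) ((hmom m).const_mul C)
      · have hlift : ∀ᵐ p : ℝ × ℝ ∂(volume.restrict (Set.Ioc (0:ℝ) T)).prod σ, ‖g p.2‖ ≤ C :=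
          Measure.quasiMeasurePreserving_snd.ae hgC
        filter_upwards [hlift] with p hp
        rw [Function.uncurry, hnormval, one_mul, mul_comm C]
        exact mul_le_mul_of_nonneg_left hp (zpow_nonneg (abs_nonneg _) m)
    have hswap : ∫ α in (0:ℝ)..T, F m α
        = ∫ u, (∫ α in Set.Ioc (0:ℝ) T, Complex.exp (Complex.I * α * u)) * ((u:ℂ)^m * g u) ∂σ := by
      rw [intervalIntegral.integral_of_le hT, hF]
      rw [MeasureTheory.integral_integral_swap hint]
      congr 1
      funext u
      exact integral_mul_const _ _
    rw [hswap]
    have hptwise : ∀ᵐ (u : ℝ) ∂σ,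
        (∫ α in Set.Ioc (0:ℝ) T, Complex.exp (Complex.I * α * u)) * ((u:ℂ)^m * g u)
        = (Complex.exp (Complex.I * ((T:ℝ):ℂ) * u) * ((u:ℂ)^(m-1) * g u)
            - Complex.exp (Complex.I * ((0:ℝ):ℂ) * u) * ((u:ℂ)^(m-1) * g u)) / Complex.I := by
      filter_upwards [hne] with u hu
      have huc : (u:ℂ) ≠ 0 := Complex.ofReal_ne_zero.mpr hu
      have h1 : (fun α : ℝ => Complex.exp (Complex.I * α * u))
          = fun α : ℝ => Complex.exp ((Complex.I * u) * α) := by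
        funext α; congr 1; ring
      rw [h1, ← intervalIntegral.integral_of_le hT,
        integral_exp_mul_complex (by simp [huc, Complex.I_ne_zero] :
          (Complex.I * (u:ℂ)) ≠ 0)]
      have e1 : (Complex.I * (u:ℂ)) * (T:ℂ) = Complex.I * (T:ℂ) * (u:ℂ) := by ring
      have e2 : (Complex.I * (u:ℂ)) * ((0:ℝ):ℂ) = Complex.I * ((0:ℝ):ℂ) * (u:ℂ) := by ring
      rw [e1, e2]
      have hz : (u:ℂ)^m = (u:ℂ)^(m-1) * u := by
        rw [← zpow_add_one₀ huc, sub_add_cancel]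
      rw [hz, div_mul_eq_mul_div,
        div_eq_div_iff (mul_ne_zero Complex.I_ne_zero huc) Complex.I_ne_zero]
      ring
    rw [integral_congr_ae hptwise, integral_div,
      integral_sub (key_int (m-1) T) (key_int (m-1) 0)]
  -- the downward step
  have down : ∀ m : ℤ, (∀ α : ℝ, 0 ≤ α → F m α = 0) → ∀ α : ℝ, 0 ≤ α → F (m-1) α = 0 := by
    intro m hm
    have hconst : ∀ T : ℝ, 0 ≤ T → F (m-1) T = F (m-1) 0 := by
      intro T hT
      have h1 := fub m T hT
      have h2 : ∫ α in (0:ℝ)..T, F m α = 0 := by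
        rw [intervalIntegral.integral_congr (g := fun _ => (0:ℂ)) ?_]
        · simp
        · intro α hα
          rw [Set.uIcc_of_le hT] at hα
          exact hm α hα.1
      rw [h2] at h1
      have h3 : F (m-1) T - F (m-1) 0 = 0 := by
        field_simp at h1
        simpa using h1.symm
      exact sub_eq_zero.mp h3
    set c := F (m-1) 0 with hc
    set M := ∫ u, C * |u| ^ (m-2) ∂σ with hM
    have hFb : ∀ T : ℝ, ‖F (m-2) T‖ ≤ M :=
      fun T => norm_integral_le_of_norm_le ((hmom (m-2)).const_mul C) (hbound (m-2) T)
    have hcle : ∀ T : ℝ, 1 ≤ T → ‖c‖ ≤ 2 * M / T := by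
      intro T hT1
      have hT : (0:ℝ) ≤ T := le_trans zero_le_one hT1
      have hTpos : (0:ℝ) < T := lt_of_lt_of_le one_pos hT1
      have h1 := fub (m-1) T hT
      have h2 : ∫ α in (0:ℝ)..T, F (m-1) α = (T:ℂ) * c := by
        rw [intervalIntegral.integral_congr (g := fun _ => c) ?_, intervalIntegral.integral_const]
        · simp [Complex.real_smul]
        · intro α hα
          rw [Set.uIcc_of_le hT] at hα
          exact hconst α hα.1
      have hm2 : m - 1 - 1 = m - 2 := by ring
      rw [h2, hm2] at h1
      have h4 : T * ‖c‖ ≤ 2 * M := by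
        calc T * ‖c‖ = ‖(T:ℂ) * c‖ := by
              rw [norm_mul, Complex.norm_real, Real.norm_eq_abs, abs_of_nonneg hT]
          _ = ‖(F (m-2) T - F (m-2) 0) / Complex.I‖ := by rw [h1]
          _ = ‖F (m-2) T - F (m-2) 0‖ := by rw [norm_div, Complex.norm_I, div_one]
          _ ≤ ‖F (m-2) T‖ + ‖F (m-2) 0‖ := norm_sub_le _ _
          _ ≤ M + M := add_le_add (hFb T) (hFb 0)
          _ = 2 * M := by ring
      rw [le_div_iff₀ hTpos, mul_comm]
      exact h4
    have hlim : Filter.Tendsto (fun T : ℝ => 2 * M / T) Filter.atTop (nhds 0) := by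
      simpa [div_eq_mul_inv] using tendsto_inv_atTop_zero.const_mul (2 * M)
    have hc0 : ‖c‖ ≤ 0 := by
      refine ge_of_tendsto hlim ?_
      filter_upwards [Filter.eventually_ge_atTop (1:ℝ)] with T hT using hcle T hT
    have hc00 : c = 0 := norm_le_zero_iff.mp hc0
    intro α hα
    rw [hconst α hα]
    exact hc00
  -- the upward step
  have up : ∀ m : ℤ, (∀ α : ℝ, 0 ≤ α → F m α = 0) → ∀ α : ℝ, 0 ≤ α → F (m+1) α = 0 := by
    intro m hm
    have hpos : ∀ α : ℝ, 0 < α → F (m+1) α = 0 := by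
      intro α hα
      have heq : (fun _ : ℝ => (0:ℂ)) =ᶠ[nhds α] F m := by
        filter_upwards [isOpen_Ioi.mem_nhds hα] with x hx
        exact (hm x (le_of_lt hx)).symm
      have h1 : HasDerivAt (fun _ : ℝ => (0:ℂ)) (Complex.I * F (m+1) α) α :=
        (hder m α).congr_of_eventuallyEq heq
      have h2 : HasDerivAt (fun _ : ℝ => (0:ℂ)) 0 α := hasDerivAt_const α 0
      have h3 := h1.unique h2
      rcases mul_eq_zero.mp h3 with h | h
      · exact absurd h Complex.I_ne_zero
      · exact h
    intro α hα
    rcases eq_or_lt_of_le hα with h | h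
    · rw [← h]
      have ht1 : Filter.Tendsto (F (m+1)) (nhdsWithin 0 (Set.Ioi 0)) (nhds (F (m+1) 0)) :=
        ((hFcont (m+1)).continuousAt).continuousWithinAt
      have ht2 : Filter.Tendsto (F (m+1)) (nhdsWithin 0 (Set.Ioi 0)) (nhds 0) := by
        refine Filter.Tendsto.congr' ?_ tendsto_const_nhds
        filter_upwards [self_mem_nhdsWithin] with x hx
        exact (hpos x hx).symm
      exact tendsto_nhds_unique ht1 ht2
    · exact hpos α h
  -- base case and induction
  have base : ∀ α : ℝ, 0 ≤ α → F 0 α = 0 := by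
    intro α hα
    have := hexp α hα
    rw [hF]
    simpa [zpow_zero, one_mul] using this
  have main : ∀ m : ℤ, ∀ α : ℝ, 0 ≤ α → F m α = 0 := by
    intro m
    induction m using Int.induction_on with
    | zero => exact base
    | succ i ih => exact up i ih
    | pred i ih => exact (show ((-i:ℤ) - 1) = (-i : ℤ) - 1 from rfl) ▸ down (-i) ih
  intro n
  have hn := main n 0 le_rfl
  rw [hF] at hn
  simpa using hn
end
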